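/- If σ : ℝ → M is an almost-periodic function into a Banach space M (i.e., the set of translates {σ(·+h) | h ∈ ℝ} is precompact in the space of bounded continuous functions C_b(ℝ, M)), then the mean value lim_{T→∞} (1/(2T)) ∫_{-T}^{T} σ(t) dt exists in M. -/

import Mathlib

open Filter Topology BoundedContinuousFunction MeasureTheory

/-- The apTranslate `σ(· + h)` of a bounded continuous function. -/
noncomputable def apTranslate {M : Type*} [NormedAddCommGroup M]
    (σ : ℝ →ᵇ M) (h : ℝ) : ℝ →ᵇ M :=
  σ.compContinuous ⟨fun t => t + h, by continuity⟩

/-- Bochner's criterion: `σ` is almost-periodic iff the set of its apTranslates is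
precompact in `C_b(ℝ, M)`. -/
def AlmostPeriodic {M : Type*} [NormedAddCommGroup M] (σ : ℝ →ᵇ M) : Prop :=
  IsCompact (closure (Set.range (apTranslate σ)))

section Helpers

variable {M : Type*} [NormedAddCommGroup M] [NormedSpace ℝ M]

lemma apTranslate_apply (σ : ℝ →ᵇ M) (h t : ℝ) : apTranslate σ h t = σ (t + h) := rfl

/-- Relative density of ε-almost-periods, from Bochner's criterion. -/
lemma exists_almost_periods (σ : ℝ →ᵇ M) (hσ : AlmostPeriodic σ) {ε : ℝ} (hε : 0 < ε) :
    ∃ ℓ > 0, ∀ a : ℝ, ∃ τ, a ≤ τ ∧ τ ≤ a + ℓ ∧ ∀ t, ‖σ (t + τ) - σ t‖ ≤ ε := by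
  have htb : TotallyBounded (Set.range (apTranslate σ)) :=
    hσ.totallyBounded.subset subset_closure
  obtain ⟨t, hts, htf, hcover⟩ :=
    totallyBounded_iff_subset.mp htb _ (Metric.dist_mem_uniformity hε)
  choose g hg using fun y : t => hts y.2
  haveI : Finite t := htf.to_subtype
  obtain ⟨b, hb⟩ := (Set.finite_range fun y : t => |g y|).bddAbove
  set b' : ℝ := max b 0 with hb'
  refine ⟨2 * b' + 1, by positivity, fun a => ?_⟩
  set h : ℝ := a + (2 * b' + 1) / 2 with hh
  have hmem := hcover (Set.mem_range_self h)
  simp only [Set.mem_iUnion] at hmem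
  obtain ⟨y, hy, hd⟩ := hmem
  have hd' : dist (apTranslate σ h) (apTranslate σ (g ⟨y, hy⟩)) < ε := by
    rwa [hg ⟨y, hy⟩]
  have hgb : |g ⟨y, hy⟩| ≤ b' := le_trans (hb ⟨⟨y, hy⟩, rfl⟩) (le_max_left _ _)
  refine ⟨h - g ⟨y, hy⟩, ?_, ?_, ?_⟩
  · have := abs_le.mp hgb
    simp only [hh]; linarith
  · have := abs_le.mp hgb
    simp only [hh]; linarith
  · intro s
    have key := BoundedContinuousFunction.dist_coe_le_dist
      (f := apTranslate σ h) (g := apTranslate σ (g ⟨y, hy⟩)) (s - g ⟨y, hy⟩)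
    rw [apTranslate_apply, apTranslate_apply, dist_eq_norm] at key
    have e1 : s - g ⟨y, hy⟩ + h = s + (h - g ⟨y, hy⟩) := by ring
    have e2 : s - g ⟨y, hy⟩ + g ⟨y, hy⟩ = s := by ring
    rw [e1, e2] at key
    exact key.trans (le_of_lt hd')

lemma norm_intervalIntegral_le (σ : ℝ →ᵇ M) (a b : ℝ) :
    ‖∫ s in a..b, σ s‖ ≤ ‖σ‖ * |b - a| :=
  intervalIntegral.norm_integral_le_of_norm_le_const fun s _ => σ.norm_coe_le_norm s

/-- Shifting the interval of integration changes the integral by at most `ε T + 2 ‖σ‖ ℓ`. -/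
lemma shift_integral_est (σ : ℝ →ᵇ M) {ε ℓ : ℝ} (hℓ : 0 < ℓ)
    (hap : ∀ a : ℝ, ∃ τ, a ≤ τ ∧ τ ≤ a + ℓ ∧ ∀ t, ‖σ (t + τ) - σ t‖ ≤ ε)
    (a : ℝ) {T : ℝ} (hT : 0 ≤ T) :
    ‖(∫ s in a..(a + T), σ s) - ∫ s in (0:ℝ)..T, σ s‖ ≤ ε * T + 2 * (‖σ‖ * ℓ) := by
  obtain ⟨τ, hτ1, hτ2, hτ⟩ := hap a
  have hint : ∀ u v : ℝ, IntervalIntegrable σ volume u v := fun u v =>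
    σ.continuous.intervalIntegrable u v
  have hintτ : IntervalIntegrable (fun s => σ (s + τ)) volume 0 T :=
    (σ.continuous.comp (continuous_add_right τ)).intervalIntegrable 0 T
  -- substitution
  have h1 : (∫ s in (0:ℝ)..T, σ (s + τ)) = ∫ s in τ..(T + τ), σ s := by
    simpa using intervalIntegral.integral_comp_add_right (a := 0) (b := T) (fun s => σ s) τ
  -- first bound
  have hbd1 : ‖(∫ s in τ..(T + τ), σ s) - ∫ s in (0:ℝ)..T, σ s‖ ≤ ε * T := by
    rw [← h1, ← intervalIntegral.integral_sub hintτ (hint 0 T)]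
    have := intervalIntegral.norm_integral_le_of_norm_le_const
      (a := (0:ℝ)) (b := T) (C := ε) (f := fun s => σ (s + τ)- σ s)
      (fun s _ => hτ s)
    simpa [abs_of_nonneg hT] using this
  -- rearrange
  have e1 := intervalIntegral.integral_add_adjacent_intervals (hint a (a + T)) (hint (a + T) (T + τ))
  have e2 := intervalIntegral.integral_add_adjacent_intervals (hint a τ) (hint τ (T + τ))
  have key : (∫ s in τ..(T + τ), σ s) - (∫ s in a..(a + T), σ s)
      = (∫ s in (a + T)..(T + τ), σ s) - (∫ s in a..τ, σ s) := by
    rw [sub_eq_sub_iff_add_eq_add, add_comm ((∫ s in τ..(T + τ), σ s)) _,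
      add_comm ((∫ s in (a + T)..(T + τ), σ s)) _]
    exact e2.trans e1.symm
  have hτa : τ - a ≤ ℓ := by linarith
  have hτa0 : 0 ≤ τ - a := by linarith
  have hbd2 : ‖(∫ s in τ..(T + τ), σ s) - (∫ s in a..(a + T), σ s)‖ ≤ 2 * (‖σ‖ * ℓ) := by
    rw [key]
    have n1 := norm_intervalIntegral_le σ (a + T) (T + τ)
    have n2 := norm_intervalIntegral_le σ a τ
    have habs1 : |T + τ - (a + T)| = τ - a := by rw [abs_of_nonneg] <;> [ring_nf; linarith]
    have habs2 : |τ - a| = τ - a := abs_of_nonneg hτa0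
    rw [habs1] at n1; rw [habs2] at n2
    have hσ0 : (0:ℝ) ≤ ‖σ‖ := norm_nonneg σ
    calc ‖(∫ s in (a + T)..(T + τ), σ s) - (∫ s in a..τ, σ s)‖
        ≤ ‖∫ s in (a + T)..(T + τ), σ s‖ + ‖∫ s in a..τ, σ s‖ := norm_sub_le _ _
      _ ≤ ‖σ‖ * (τ - a) + ‖σ‖ * (τ - a) := add_le_add n1 n2
      _ ≤ 2 * (‖σ‖ * ℓ) := by nlinarith
  calc ‖(∫ s in a..(a + T), σ s) - ∫ s in (0:ℝ)..T, σ s‖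
      ≤ ‖(∫ s in a..(a + T), σ s) - (∫ s in τ..(T + τ), σ s)‖
        + ‖(∫ s in τ..(T + τ), σ s) - ∫ s in (0:ℝ)..T, σ s‖ := by
          have := norm_sub_le_norm_sub_add_norm_sub
            (∫ s in a..(a + T), σ s) (∫ s in τ..(T + τ), σ s) (∫ s in (0:ℝ)..T, σ s)
          exact this
    _ ≤ 2 * (‖σ‖ * ℓ) + ε * T := by
        rw [norm_sub_rev]
        exact add_le_add hbd2 hbd1
    _ = ε * T + 2 * (‖σ‖ * ℓ) := by ring

end Helpers

section Helpers2

variable {M : Type*} [NormedAddCommGroup M] [NormedSpace ℝ M]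

lemma inner_shift (σ : ℝ →ᵇ M) (s S : ℝ) :
    (∫ u in (0:ℝ)..S, σ (s + u)) = ∫ u in s..(s + S), σ u := by
  have h := intervalIntegral.integral_comp_add_right (a := (0:ℝ)) (b := S) (fun u => σ u) s
  simp only [zero_add] at h
  simp_rw [add_comm s]
  exact h

lemma double_est [CompleteSpace M] (σ : ℝ →ᵇ M) {ε ℓ : ℝ} (hℓ : 0 < ℓ)
    (hap : ∀ a : ℝ, ∃ τ, a ≤ τ ∧ τ ≤ a + ℓ ∧ ∀ t, ‖σ (t + τ) - σ t‖ ≤ ε)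
    {T S : ℝ} (hT : 0 ≤ T) (hS : 0 ≤ S) :
    ‖(∫ s in (0:ℝ)..T, ∫ u in (0:ℝ)..S, σ (s + u)) - T • ∫ u in (0:ℝ)..S, σ u‖
      ≤ (ε * S + 2 * (‖σ‖ * ℓ)) * T := by
  have hint : ∀ u v : ℝ, IntervalIntegrable σ volume u v := fun u v =>
    σ.continuous.intervalIntegrable u v
  have hPcont : Continuous fun x => ∫ u in (0:ℝ)..x, σ u :=
    intervalIntegral.continuous_primitive hint 0
  have hFeq : (fun s => ∫ u in (0:ℝ)..S, σ (s + u))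
      = fun s => (∫ u in (0:ℝ)..(s + S), σ u) - ∫ u in (0:ℝ)..s, σ u := by
    funext s
    rw [intervalIntegral.integral_interval_sub_left (hint 0 (s + S)) (hint 0 s)]
    exact inner_shift σ s S
  have hFcont : Continuous fun s => ∫ u in (0:ℝ)..S, σ (s + u) := by
    rw [hFeq]
    exact (hPcont.comp (continuous_id.add continuous_const)).sub hPcont
  have hFint : IntervalIntegrable (fun s => ∫ u in (0:ℝ)..S, σ (s + u)) volume 0 T :=
    hFcont.intervalIntegrable 0 T
  have hsub : (∫ s in (0:ℝ)..T, ((∫ u in (0:ℝ)..S, σ (s + u)) - ∫ u in (0:ℝ)..S, σ u))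
      = (∫ s in (0:ℝ)..T, ∫ u in (0:ℝ)..S, σ (s + u)) - T • ∫ u in (0:ℝ)..S, σ u := by
    rw [intervalIntegral.integral_sub hFint intervalIntegrable_const,
      intervalIntegral.integral_const]
    simp
  rw [← hsub]
  have hb : ∀ s ∈ Set.uIoc (0:ℝ) T,
      ‖(∫ u in (0:ℝ)..S, σ (s + u)) - ∫ u in (0:ℝ)..S, σ u‖ ≤ ε * S + 2 * (‖σ‖ * ℓ) := by
    intro s _
    rw [inner_shift σ s S]
    exact shift_integral_est σ hℓ hap s hS
  have := intervalIntegral.norm_integral_le_of_norm_le_const hb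
  simpa [abs_of_nonneg hT] using this

lemma double_swap (σ : ℝ →ᵇ M) {T S : ℝ} (hT : 0 ≤ T) (hS : 0 ≤ S) :
    (∫ s in (0:ℝ)..T, ∫ u in (0:ℝ)..S, σ (s + u))
      = ∫ s in (0:ℝ)..S, ∫ u in (0:ℝ)..T, σ (s + u) := by
  haveI i1 : IsFiniteMeasure (volume.restrict (Set.Ioc (0:ℝ) T)) :=
    ⟨by rw [Measure.restrict_apply_univ, Real.volume_Ioc]; exact ENNReal.ofReal_lt_top⟩
  haveI i2 : IsFiniteMeasure (volume.restrict (Set.Ioc (0:ℝ) S)) :=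
    ⟨by rw [Measure.restrict_apply_univ, Real.volume_Ioc]; exact ENNReal.ofReal_lt_top⟩
  have hInt : Integrable (Function.uncurry fun s u => σ (s + u))
      ((volume.restrict (Set.Ioc (0:ℝ) T)).prod (volume.restrict (Set.Ioc (0:ℝ) S))) := by
    refine Integrable.mono' (integrable_const ‖σ‖)
      ((σ.continuous.comp (continuous_fst.add continuous_snd)).aestronglyMeasurable) ?_
    filter_upwards with p using σ.norm_coe_le_norm _
  rw [intervalIntegral.integral_of_le hT, intervalIntegral.integral_of_le hS]
  simp_rw [intervalIntegral.integral_of_le hS, intervalIntegral.integral_of_le hT]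
  rw [MeasureTheory.integral_integral_swap hInt]
  simp_rw [add_comm]

end Helpers2

section BB

variable {M : Type*} [NormedAddCommGroup M] [NormedSpace ℝ M]

/-- The Cauchy comparison for one-sided averages. -/
lemma avg_diff_est [CompleteSpace M] (σ : ℝ →ᵇ M) {ε ℓ : ℝ} (hℓ : 0 < ℓ)
    (hap : ∀ a : ℝ, ∃ τ, a ≤ τ ∧ τ ≤ a + ℓ ∧ ∀ t, ‖σ (t + τ) - σ t‖ ≤ ε)
    {P Q : ℝ} (hP : 0 < P) (hQ : 0 < Q) :
    ‖(1 / Q) • (∫ t in (0:ℝ)..Q, σ t) - (1 / P) • ∫ t in (0:ℝ)..P, σ t‖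
      ≤ 2 * ε + 2 * (‖σ‖ * ℓ) / P + 2 * (‖σ‖ * ℓ) / Q := by
  set K := ‖σ‖ * ℓ with hK
  have hK0 : 0 ≤ K := mul_nonneg (norm_nonneg σ) hℓ.le
  have h1 := double_est σ hℓ hap hP.le hQ.le
  have h2 := double_est σ hℓ hap hQ.le hP.le
  have hswap := double_swap σ hP.le hQ.le
  have hmain : ‖P • (∫ t in (0:ℝ)..Q, σ t) - Q • ∫ t in (0:ℝ)..P, σ t‖
      ≤ (ε * Q + 2 * K) * P + (ε * P + 2 * K) * Q := by
    calc ‖P • (∫ t in (0:ℝ)..Q, σ t) - Q • ∫ t in (0:ℝ)..P, σ t‖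
        ≤ ‖P • (∫ t in (0:ℝ)..Q, σ t) - (∫ s in (0:ℝ)..P, ∫ u in (0:ℝ)..Q, σ (s + u))‖
          + ‖(∫ s in (0:ℝ)..P, ∫ u in (0:ℝ)..Q, σ (s + u)) - Q • ∫ t in (0:ℝ)..P, σ t‖ :=
          norm_sub_le_norm_sub_add_norm_sub _ _ _
      _ ≤ (ε * Q + 2 * K) * P + (ε * P + 2 * K) * Q := by
          rw [norm_sub_rev]
          refine add_le_add h1 ?_
          rw [hswap]
          exact h2
  have hdecomp : (1 / Q) • (∫ t in (0:ℝ)..Q, σ t) - (1 / P) • ∫ t in (0:ℝ)..P, σ t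
      = (1 / (P * Q)) • (P • (∫ t in (0:ℝ)..Q, σ t) - Q • ∫ t in (0:ℝ)..P, σ t) := by
    rw [smul_sub, smul_smul, smul_smul]
    congr 1 <;> · congr 1; field_simp
  rw [hdecomp, norm_smul, Real.norm_eq_abs, abs_of_pos (by positivity)]
  calc (1 / (P * Q)) * ‖P • (∫ t in (0:ℝ)..Q, σ t) - Q • ∫ t in (0:ℝ)..P, σ t‖
      ≤ (1 / (P * Q)) * ((ε * Q + 2 * K) * P + (ε * P + 2 * K) * Q) := by
        apply mul_le_mul_of_nonneg_left hmain (by positivity)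
    _ = 2 * ε + 2 * K / P + 2 * K / Q := by field_simp; ring

end BB

/-- If `σ : ℝ → M` is almost periodic with values in a Banach space `M`, then
its mean value `lim_{T→∞} (1/(2T)) ∫_{-T}^{T} σ(t) dt` exists in `M`. -/
theorem mean_value_exists {M : Type*} [NormedAddCommGroup M] [NormedSpace ℝ M]
    [CompleteSpace M] (σ : ℝ →ᵇ M) (hσ : AlmostPeriodic σ) :
    ∃ m : M, Tendsto (fun T : ℝ => (1 / (2 * T)) • ∫ t in (-T)..T, σ t) atTop (𝓝 m) := by
  apply cauchySeq_tendsto_of_complete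
  rw [Metric.cauchySeq_iff']
  intro ε hε
  have hδ : 0 < ε / 9 := by positivity
  obtain ⟨ℓ, hℓ, hap⟩ := exists_almost_periods σ hσ hδ
  set K := ‖σ‖ * ℓ with hK
  have hK0 : 0 ≤ K := mul_nonneg (norm_nonneg σ) hℓ.le
  set N : ℝ := max 1 (2 * K / (ε / 9)) with hN
  have hN1 : (1:ℝ) ≤ N := le_max_left _ _
  have hN0 : (0:ℝ) < N := lt_of_lt_of_le one_pos hN1
  -- key: for 1 ≤ X, the symmetric average is close to the one-sided average over [0,2X]
  have hAB : ∀ X : ℝ, 0 < X →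
      ‖(1 / (2 * X)) • (∫ t in (-X)..X, σ t) - (1 / (2 * X)) • ∫ t in (0:ℝ)..(2 * X), σ t‖
        ≤ ε / 9 + K / X := by
    intro X hX
    have h2X : (0:ℝ) < 2 * X := by linarith
    have hshift := shift_integral_est σ hℓ hap (-X) h2X.le
    have he : -X + 2 * X = X := by ring
    rw [he] at hshift
    rw [← smul_sub, norm_smul, Real.norm_eq_abs, abs_of_pos (by positivity)]
    calc (1 / (2 * X)) * ‖(∫ t in (-X)..X, σ t) - ∫ t in (0:ℝ)..(2 * X), σ t‖
        ≤ (1 / (2 * X)) * (ε / 9 * (2 * X) + 2 * K) := by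
          apply mul_le_mul_of_nonneg_left hshift (by positivity)
      _ = ε / 9 + K / X := by field_simp
  refine ⟨N, fun n hn => ?_⟩
  have hn0 : (0:ℝ) < n := lt_of_lt_of_le hN0 hn
  have h2n : (0:ℝ) < 2 * n := by linarith
  have h2N : (0:ℝ) < 2 * N := by linarith
  have hBB := avg_diff_est σ hℓ hap h2n h2N
  have hABn := hAB n hn0
  have hABN := hAB N hN0
  -- bound K / N ≤ (ε/9) / 2
  have hKN : K / N ≤ ε / 9 / 2 := by
    have h1 : 2 * K / (ε / 9) ≤ N := le_max_right _ _
    rw [div_le_iff₀ hδ] at h1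
    rw [div_le_iff₀ hN0]
    linarith
  have hKn : K / n ≤ K / N := div_le_div_of_nonneg_left hK0 hN0 hn
  simp only [dist_eq_norm]
  have t1 : ‖(1 / (2 * n)) • (∫ t in (-n)..n, σ t) - (1 / (2 * N)) • ∫ t in (-N)..N, σ t‖
      ≤ ‖(1 / (2 * n)) • (∫ t in (-n)..n, σ t) - (1 / (2 * n)) • ∫ t in (0:ℝ)..(2 * n), σ t‖
        + ‖(1 / (2 * n)) • (∫ t in (0:ℝ)..(2 * n), σ t)
            - (1 / (2 * N)) • ∫ t in (0:ℝ)..(2 * N), σ t‖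
        + ‖(1 / (2 * N)) • (∫ t in (0:ℝ)..(2 * N), σ t)
            - (1 / (2 * N)) • ∫ t in (-N)..N, σ t‖ := by
    calc ‖(1 / (2 * n)) • (∫ t in (-n)..n, σ t) - (1 / (2 * N)) • ∫ t in (-N)..N, σ t‖
        ≤ ‖(1 / (2 * n)) • (∫ t in (-n)..n, σ t) - (1 / (2 * n)) • ∫ t in (0:ℝ)..(2 * n), σ t‖
          + ‖(1 / (2 * n)) • (∫ t in (0:ℝ)..(2 * n), σ t)
              - (1 / (2 * N)) • ∫ t in (-N)..N, σ t‖ :=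
          norm_sub_le_norm_sub_add_norm_sub _ _ _
      _ ≤ _ := by
          rw [add_assoc]
          exact add_le_add le_rfl (norm_sub_le_norm_sub_add_norm_sub _ _ _)
  have hYZ : ‖(1 / (2 * n)) • (∫ t in (0:ℝ)..(2 * n), σ t)
      - (1 / (2 * N)) • ∫ t in (0:ℝ)..(2 * N), σ t‖
      ≤ 2 * (ε / 9) + 2 * K / (2 * n) + 2 * K / (2 * N) := by
    rw [norm_sub_rev]
    exact hBB
  have hZW : ‖(1 / (2 * N)) • (∫ t in (0:ℝ)..(2 * N), σ t)
      - (1 / (2 * N)) • ∫ t in (-N)..N, σ t‖ ≤ ε / 9 + K / N := by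
    rw [norm_sub_rev]
    exact hABN
  have e1 : 2 * K / (2 * n) = K / n := mul_div_mul_left K n two_ne_zero
  have e2 : 2 * K / (2 * N) = K / N := mul_div_mul_left K N two_ne_zero
  rw [e1, e2] at hYZ
  have hε9 : ε / 9 < ε / 6 := by linarith
  linarith
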